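/- For every ν < 0, lim_{x → −∞} D_{ν−1}(x)² / (D_ν(x) · D_{ν−2}(x)) = (ν−1)/ν. -/

import Mathlib

open MeasureTheory Real Filter

noncomputable def G (ν x : ℝ) : ℝ :=
  ∫ t in Set.Ioi (0:ℝ), t ^ (-ν - 1) * Real.exp (-t^2/2 - x*t)

noncomputable def D (ν x : ℝ) : ℝ :=
  Real.exp (-x^2/4) / Real.Gamma (-ν) * G ν x

noncomputable def Igauss : ℝ := ∫ u : ℝ, Real.exp (-u^2/2)

lemma gauss_integrable : Integrable (fun u : ℝ => Real.exp (-u^2/2)) := by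
  have h := integrable_exp_neg_mul_sq (by norm_num : (0:ℝ) < 1/2)
  have e : (fun u : ℝ => Real.exp (-u^2/2)) = fun u : ℝ => Real.exp (-(1/2) * u^2) := by
    funext u; congr 1; ring
  rw [e]; exact h

lemma Igauss_pos : 0 < Igauss := by
  have h : Igauss = Real.sqrt (π / (1/2)) := by
    rw [Igauss, ← integral_gaussian (1/2)]
    congr 1; funext u; congr 1; ring
  rw [h]
  apply Real.sqrt_pos.2
  positivity

lemma bound_integrable (c : ℝ) :
    Integrable (fun u : ℝ => Real.exp (c * |u|) * Real.exp (-u^2/2)) := by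
  have h1 : Integrable (fun u : ℝ => Real.exp (-(u - c)^2/2)) :=
    gauss_integrable.comp_sub_right c
  have h2 : Integrable (fun u : ℝ => Real.exp (-(u + c)^2/2)) := by
    simpa [sub_neg_eq_add] using gauss_integrable.comp_sub_right (-c)
  have hg : Integrable (fun u : ℝ =>
      Real.exp (c^2/2) * (Real.exp (-(u - c)^2/2) + Real.exp (-(u + c)^2/2))) :=
    (h1.add h2).const_mul _
  refine hg.mono' ?_ ?_
  · exact ((Real.continuous_exp.comp (continuous_const.mul continuous_abs)).mul
      (Real.continuous_exp.comp (by continuity))).aestronglyMeasurable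
  · filter_upwards with u
    rw [Real.norm_eq_abs, abs_of_pos (by positivity), ← Real.exp_add]
    rcases le_or_gt 0 u with hu | hu
    · have habs : |u| = u := abs_of_nonneg hu
      have : c * |u| + -u^2/2 = c^2/2 + (-(u - c)^2/2) := by rw [habs]; ring
      rw [this, Real.exp_add]
      have := Real.exp_pos (-(u + c)^2/2)
      nlinarith [Real.exp_pos (c^2/2), Real.exp_pos (-(u - c)^2/2)]
    · have habs : |u| = -u := abs_of_neg hu
      have : c * |u| + -u^2/2 = c^2/2 + (-(u + c)^2/2) := by rw [habs]; ring
      rw [this, Real.exp_add]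
      nlinarith [Real.exp_pos (c^2/2), Real.exp_pos (-(u - c)^2/2), Real.exp_pos (-(u + c)^2/2)]

/-- pointwise bound used for domination -/
lemma rpow_bound {α s u : ℝ} (hs : 1 ≤ s) (hu : -s/2 < u) :
    (1 + u/s) ^ α ≤ 2 ^ |α| * Real.exp (|α| * |u|) := by
  have hs0 : (0:ℝ) < s := lt_of_lt_of_le one_pos hs
  have hb : (1:ℝ)/2 < 1 + u/s := by
    have : -(1:ℝ)/2 < u/s := by
      rw [div_lt_div_iff₀ (by norm_num) hs0] at *
      nlinarith
    linarith
  have h2 : (1:ℝ) ≤ 2 ^ |α| := by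
    have := Real.rpow_le_rpow_of_exponent_le (by norm_num : (1:ℝ) ≤ 2) (abs_nonneg α)
    simpa using this
  rcases le_or_gt 0 α with hα | hα
  · have habs : |α| = α := abs_of_nonneg hα
    have hle1 : 1 + u/s ≤ 1 + |u| := by
      have : u/s ≤ |u| := by
        calc u/s ≤ |u/s| := le_abs_self _
        _ = |u|/s := by rw [abs_div, abs_of_pos hs0]
        _ ≤ |u| := div_le_self (abs_nonneg u) hs
      linarith
    have hle2 : (1 + u/s) ^ α ≤ (1 + |u|) ^ α :=
      Real.rpow_le_rpow (by linarith) hle1 hα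
    have hle3 : (1 + |u|) ^ α ≤ (Real.exp |u|) ^ α :=
      Real.rpow_le_rpow (by linarith) (by linarith [Real.add_one_le_exp |u|]) hα
    have he : (Real.exp |u|) ^ α = Real.exp (|α| * |u|) := by
      rw [Real.rpow_def_of_pos (Real.exp_pos |u|), Real.log_exp, habs, mul_comm]
    calc (1 + u/s) ^ α ≤ (Real.exp |u|) ^ α := le_trans hle2 hle3
      _ = Real.exp (|α| * |u|) := he
      _ ≤ 2 ^ |α| * Real.exp (|α| * |u|) := by nlinarith [Real.exp_pos (|α| * |u|)]
  · have habs : |α| = -α := abs_of_neg hα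
    have hle : (1 + u/s) ^ α ≤ ((1:ℝ)/2) ^ α :=
      Real.rpow_le_rpow_of_nonpos (by norm_num) hb.le hα.le
    have he : ((1:ℝ)/2) ^ α = 2 ^ |α| := by
      rw [habs, one_div, Real.inv_rpow (by norm_num), ← Real.rpow_neg (by norm_num)]
    calc (1 + u/s) ^ α ≤ 2 ^ |α| := by rw [← he]; exact hle
      _ ≤ 2 ^ |α| * Real.exp (|α| * |u|) := by
          nlinarith [Real.one_le_exp (mul_nonneg (abs_nonneg α) (abs_nonneg u)),
            Real.rpow_pos_of_pos (by norm_num : (0:ℝ) < 2) |α|]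

lemma expc : Continuous (fun u : ℝ => Real.exp (-u^2/2)) := by continuity

lemma base_pos {s u : ℝ} (hs : 1 ≤ s) (hu : -s/2 < u) : (1:ℝ)/2 < 1 + u/s := by
  have hs0 : (0:ℝ) < s := lt_of_lt_of_le one_pos hs
  have : -(1:ℝ)/2 < u/s := by
    rw [div_lt_div_iff₀ (by norm_num) hs0]
    nlinarith
  linarith

lemma fmeas (α s : ℝ) :
    Measurable (fun u : ℝ => Real.exp (Real.log (1 + u/s) * α) * Real.exp (-u^2/2)) :=
  (((Real.measurable_log.comp (measurable_const.add (measurable_id.div_const s))).mul_const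
      α).exp).mul (Real.continuous_exp.comp (by continuity)).measurable

lemma f_eq_f' {α s u : ℝ} (hs : 1 ≤ s) (hu : -s/2 < u) :
    (1 + u/s) ^ α * Real.exp (-u^2/2)
      = Real.exp (Real.log (1 + u/s) * α) * Real.exp (-u^2/2) := by
  rw [Real.rpow_def_of_pos (by linarith [base_pos hs hu])]

lemma f_le_g {α s u : ℝ} (hs : 1 ≤ s) (hu : -s/2 < u) :
    ‖(1 + u/s) ^ α * Real.exp (-u^2/2)‖
      ≤ 2 ^ |α| * (Real.exp (|α| * |u|) * Real.exp (-u^2/2)) := by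
  have hb : (0:ℝ) < 1 + u/s := by linarith [base_pos hs hu]
  rw [Real.norm_eq_abs,
    abs_of_nonneg (mul_nonneg (Real.rpow_nonneg hb.le α) (Real.exp_pos _).le)]
  calc (1 + u/s) ^ α * Real.exp (-u^2/2)
      ≤ (2 ^ |α| * Real.exp (|α| * |u|)) * Real.exp (-u^2/2) :=
        mul_le_mul_of_nonneg_right (rpow_bound hs hu) (Real.exp_pos _).le
    _ = 2 ^ |α| * (Real.exp (|α| * |u|) * Real.exp (-u^2/2)) := by ring

lemma main_intOn {α s : ℝ} (hs : 1 ≤ s) :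
    IntegrableOn (fun u : ℝ => (1 + u/s) ^ α * Real.exp (-u^2/2)) (Set.Ioi (-s/2)) := by
  have hg : IntegrableOn (fun u : ℝ => 2 ^ |α| * (Real.exp (|α| * |u|) * Real.exp (-u^2/2)))
      (Set.Ioi (-s/2)) := ((bound_integrable |α|).const_mul _).integrableOn
  refine hg.mono' ?_ ?_
  · refine ((fmeas α s).aestronglyMeasurable.restrict).congr ?_
    refine ((ae_restrict_iff' measurableSet_Ioi).2 (Eventually.of_forall fun u hu => ?_))
    exact (f_eq_f' hs hu).symm
  · exact (ae_restrict_iff' measurableSet_Ioi).2 (Eventually.of_forall fun u hu => f_le_g hs hu)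

lemma Jmain {α : ℝ} :
    Tendsto (fun s : ℝ => ∫ u in Set.Ioi (-s/2), (1 + u/s) ^ α * Real.exp (-u^2/2))
      atTop (nhds Igauss) := by
  have key := tendsto_integral_filter_of_dominated_convergence (μ := volume) (l := atTop)
    (F := fun s : ℝ => Set.indicator (Set.Ioi (-s/2))
      (fun u : ℝ => Real.exp (Real.log (1 + u/s) * α) * Real.exp (-u^2/2)))
    (f := fun u : ℝ => Real.exp (-u^2/2))
    (bound := fun u : ℝ => 2 ^ |α| * (Real.exp (|α| * |u|) * Real.exp (-u^2/2)))
    ?_ ?_ ?_ ?_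
  · refine Tendsto.congr' ?_ key
    filter_upwards [eventually_ge_atTop (1:ℝ)] with s hs
    rw [integral_indicator measurableSet_Ioi]
    exact (setIntegral_congr_fun measurableSet_Ioi (fun u hu => (f_eq_f' hs hu))).symm
  · exact Eventually.of_forall fun s =>
      ((fmeas α s).indicator measurableSet_Ioi).aestronglyMeasurable
  · filter_upwards [eventually_ge_atTop (1:ℝ)] with s hs
    refine Eventually.of_forall fun u => ?_
    by_cases hu : u ∈ Set.Ioi (-s/2)
    · rw [Set.indicator_of_mem hu, ← f_eq_f' hs hu]
      exact f_le_g hs hu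
    · rw [Set.indicator_of_notMem hu]
      simp only [norm_zero]
      positivity
  · exact (bound_integrable |α|).const_mul _
  · refine Eventually.of_forall fun u => ?_
    have h1 : Tendsto (fun s : ℝ => 1 + u/s) atTop (nhds 1) := by
      have h0 : Tendsto (fun s : ℝ => u * s⁻¹) atTop (nhds (u * 0)) :=
        tendsto_inv_atTop_zero.const_mul u
      have := tendsto_const_nhds (x := (1:ℝ)) (f := atTop (α := ℝ)) |>.add h0
      simpa [div_eq_mul_inv] using this
    have hlog : Tendsto (fun s : ℝ => Real.log (1 + u/s)) atTop (nhds 0) := by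
      have := (Real.continuousAt_log one_ne_zero).tendsto.comp h1
      simpa [Function.comp_def] using this
    have hexp1 : Tendsto (fun s : ℝ => Real.exp (Real.log (1 + u/s) * α)) atTop (nhds 1) := by
      have h2 := hlog.mul_const α
      rw [zero_mul] at h2
      have := Real.continuous_exp.continuousAt.tendsto.comp h2
      simpa [Function.comp_def] using this
    have h3 : Tendsto (fun s : ℝ => Real.exp (Real.log (1 + u/s) * α) * Real.exp (-u^2/2))
        atTop (nhds (Real.exp (-u^2/2))) := by
      simpa using hexp1.mul (tendsto_const_nhds (x := Real.exp (-u^2/2)))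
    refine Tendsto.congr' ?_ h3
    filter_upwards [eventually_gt_atTop (2*|u|)] with s hs
    have hu : -s/2 < u := by
      have h4 : |u| < s/2 := by linarith
      have := neg_abs_le u
      have := abs_nonneg u
      linarith
    rw [Set.indicator_of_mem (Set.mem_Ioi.2 hu)]

lemma tail_intOn {α s : ℝ} (hα : -1 < α) (hs : 0 < s) :
    IntegrableOn (fun u : ℝ => (1 + u/s) ^ α) (Set.Ioc (-s) (-s/2)) := by
  have h0 : IntervalIntegrable (fun x : ℝ => x ^ α) volume 0 (1/2) :=
    intervalIntegral.intervalIntegrable_rpow' hα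
  have h1 := h0.comp_add_right 1
  have h2 := h1.comp_mul_right (c := s⁻¹)
  have e1 : ((0:ℝ) - 1)/s⁻¹ = -s := by rw [div_inv_eq_mul]; ring
  have e2 : ((1:ℝ)/2 - 1)/s⁻¹ = -s/2 := by rw [div_inv_eq_mul]; ring
  rw [e1, e2] at h2
  have e3 : (fun x : ℝ => (x * s⁻¹ + 1) ^ α) = fun u : ℝ => (1 + u/s) ^ α := by
    funext x; rw [div_eq_mul_inv, add_comm]
  rw [e3] at h2
  exact (intervalIntegrable_iff_integrableOn_Ioc_of_le (by linarith)).mp h2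

lemma tail_integral_val {α s : ℝ} (hs : 0 < s) :
    ∫ u in Set.Ioc (-s) (-s/2), (1 + u/s) ^ α
      = s * ∫ x in (0:ℝ)..(1/2), x ^ α := by
  rw [← intervalIntegral.integral_of_le (by linarith : -s ≤ -s/2)]
  rw [intervalIntegral.integral_comp_div (f := fun x : ℝ => (1+x) ^ α) hs.ne']
  have e1 : -s/s = -1 := by field_simp
  have e2 : -s/2/s = -(1/2) := by field_simp
  rw [e1, e2, smul_eq_mul]
  congr 1
  have := intervalIntegral.integral_comp_add_left (a := (-1:ℝ)) (b := -(1/2))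
    (fun x : ℝ => x ^ α) 1
  rw [this]
  norm_num

lemma Jtail {α : ℝ} (hα : -1 < α) :
    Tendsto (fun s : ℝ => ∫ u in Set.Ioc (-s) (-s/2), (1 + u/s) ^ α * Real.exp (-u^2/2))
      atTop (nhds 0) := by
  have hφ : Tendsto (fun s : ℝ => s * Real.exp (-s^2/8)) atTop (nhds 0) := by
    have hψ : Tendsto (fun s : ℝ => s * Real.exp (-s)) atTop (nhds 0) := by
      simpa using tendsto_pow_mul_exp_neg_atTop_nhds_zero 1
    refine tendsto_of_tendsto_of_tendsto_of_le_of_le' tendsto_const_nhds hψ ?_ ?_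
    · filter_upwards [eventually_ge_atTop (0:ℝ)] with s hs
      positivity
    · filter_upwards [eventually_ge_atTop (8:ℝ)] with s hs
      have : -s^2/8 ≤ -s := by nlinarith
      exact mul_le_mul_of_nonneg_left (Real.exp_le_exp.2 this) (by linarith)
  have hupper : Tendsto
      (fun s : ℝ => (∫ x in (0:ℝ)..(1/2), x ^ α) * (s * Real.exp (-s^2/8)))
      atTop (nhds 0) := by
    simpa using hφ.const_mul (∫ x in (0:ℝ)..(1/2), x ^ α)
  refine tendsto_of_tendsto_of_tendsto_of_le_of_le' tendsto_const_nhds hupper ?_ ?_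
  · filter_upwards [eventually_ge_atTop (1:ℝ)] with s hs
    have hs0 : (0:ℝ) < s := by linarith
    refine setIntegral_nonneg measurableSet_Ioc fun u hu => ?_
    have hb : (0:ℝ) ≤ 1 + u/s := by
      have : -1 < u/s := by
        rw [neg_lt, ← neg_div]
        exact (div_lt_one hs0).2 (by linarith [hu.1])
      linarith
    exact mul_nonneg (Real.rpow_nonneg hb α) (Real.exp_pos _).le
  · filter_upwards [eventually_ge_atTop (1:ℝ)] with s hs
    have hs0 : (0:ℝ) < s := by linarith
    have int1 : IntegrableOn (fun u : ℝ => (1 + u/s) ^ α * Real.exp (-u^2/2))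
        (Set.Ioc (-s) (-s/2)) := by
      have := (tail_intOn hα hs0).bdd_mul
        (f := fun u : ℝ => Real.exp (-u^2/2)) (c := 1) expc.aestronglyMeasurable
        (Eventually.of_forall fun u => by
          beta_reduce
          rw [Real.norm_eq_abs, abs_of_pos (Real.exp_pos _)]
          exact Real.exp_le_one_iff.2 (by nlinarith [sq_nonneg u]))
      exact this.congr (Eventually.of_forall fun u => mul_comm _ _)
    have int2 : IntegrableOn (fun u : ℝ => (1 + u/s) ^ α * Real.exp (-s^2/8))
        (Set.Ioc (-s) (-s/2)) := (tail_intOn hα hs0).mul_const _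
    calc ∫ u in Set.Ioc (-s) (-s/2), (1 + u/s) ^ α * Real.exp (-u^2/2)
        ≤ ∫ u in Set.Ioc (-s) (-s/2), (1 + u/s) ^ α * Real.exp (-s^2/8) := by
          refine setIntegral_mono_on int1 int2 measurableSet_Ioc fun u hu => ?_
          have hb : (0:ℝ) ≤ 1 + u/s := by
            have : -1 < u/s := by
              rw [neg_lt, ← neg_div]
              exact (div_lt_one hs0).2 (by linarith [hu.1])
            linarith
          refine mul_le_mul_of_nonneg_left (Real.exp_le_exp.2 ?_) (Real.rpow_nonneg hb α)
          nlinarith [hu.2]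
      _ = (∫ u in Set.Ioc (-s) (-s/2), (1 + u/s) ^ α) * Real.exp (-s^2/8) :=
          integral_mul_const _ _
      _ = (s * ∫ x in (0:ℝ)..(1/2), x ^ α) * Real.exp (-s^2/8) := by
          rw [tail_integral_val hs0]
      _ = (∫ x in (0:ℝ)..(1/2), x ^ α) * (s * Real.exp (-s^2/8)) := by ring

lemma Jlim {α : ℝ} (hα : -1 < α) :
    Tendsto (fun s : ℝ => ∫ u in Set.Ioi (-s), (1 + u/s) ^ α * Real.exp (-u^2/2))
      atTop (nhds Igauss) := by
  have hsum := (Jtail hα).add (Jmain (α := α))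
  rw [zero_add] at hsum
  refine Tendsto.congr' ?_ hsum
  filter_upwards [eventually_ge_atTop (1:ℝ)] with s hs
  have hs0 : (0:ℝ) < s := by linarith
  rw [← setIntegral_union (Set.Ioc_disjoint_Ioi le_rfl) measurableSet_Ioi
    (by
      have := (tail_intOn hα hs0).bdd_mul
        (f := fun u : ℝ => Real.exp (-u^2/2)) (c := 1) expc.aestronglyMeasurable
        (Eventually.of_forall fun u => by
          beta_reduce
          rw [Real.norm_eq_abs, abs_of_pos (Real.exp_pos _)]
          exact Real.exp_le_one_iff.2 (by nlinarith [sq_nonneg u]))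
      exact this.congr (Eventually.of_forall fun u => mul_comm _ _))
    (main_intOn hs)]
  rw [Set.Ioc_union_Ioi_eq_Ioi (by linarith : -s ≤ -s/2)]

lemma Klim {μ : ℝ} (hμ : μ < 0) :
    Tendsto (fun s : ℝ => s ^ (μ+1) * Real.exp (-s^2/2) * G μ (-s)) atTop (nhds Igauss) := by
  have hα : -1 < -μ - 1 := by linarith
  refine Tendsto.congr' ?_ (Jlim hα)
  filter_upwards [eventually_ge_atTop (1:ℝ)] with s hs
  have hs0 : (0:ℝ) < s := by linarith
  have h1 : G μ (-s)
      = ∫ u in Set.Ioi (-s), (u+s) ^ (-μ-1) * Real.exp (-(u+s)^2/2 - (-s)*(u+s)) := by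
    rw [G, ← integral_indicator measurableSet_Ioi, ← integral_indicator measurableSet_Ioi]
    rw [← integral_add_right_eq_self (fun t : ℝ =>
      Set.indicator (Set.Ioi (0:ℝ)) (fun t => t ^ (-μ-1) * Real.exp (-t^2/2 - (-s)*t)) t) s]
    congr 1
    funext u
    simp only [Set.indicator_apply, Set.mem_Ioi]
    by_cases h : -s < u
    · rw [if_pos (by linarith), if_pos h]
    · rw [if_neg (by intro hc; exact h (by linarith)), if_neg h]
  have h2 : (∫ u in Set.Ioi (-s), (u+s) ^ (-μ-1) * Real.exp (-(u+s)^2/2 - (-s)*(u+s)))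
      = (Real.exp (s^2/2) * s ^ (-μ-1)) *
        ∫ u in Set.Ioi (-s), (1 + u/s) ^ (-μ-1) * Real.exp (-u^2/2) := by
    rw [← integral_const_mul]
    refine setIntegral_congr_fun measurableSet_Ioi fun u hu => ?_
    have hus : (0:ℝ) < u + s := by
      have := Set.mem_Ioi.1 hu; linarith
    have h5 : (0:ℝ) < 1 + u/s := by
      have hd : (0:ℝ) < (u+s)/s := div_pos hus hs0
      have e : (u+s)/s = 1 + u/s := by field_simp; ring
      rwa [e] at hd
    have e1 : u + s = s * (1 + u/s) := by field_simp; ring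
    have e2 : (u+s) ^ (-μ-1) = s ^ (-μ-1) * (1 + u/s) ^ (-μ-1) := by
      rw [e1, Real.mul_rpow hs0.le h5.le]
    have e3 : -(u+s)^2/2 - (-s)*(u+s) = s^2/2 + -u^2/2 := by ring
    rw [e2, e3, Real.exp_add]
    ring
  rw [h1, h2]
  have e5 : (s ^ (μ+1) * s ^ (-μ-1)) * (Real.exp (-s^2/2) * Real.exp (s^2/2)) = 1 := by
    have ea : μ + 1 + (-μ - 1) = 0 := by ring
    have eb : -s^2/2 + s^2/2 = 0 := by ring
    rw [← Real.rpow_add hs0, ← Real.exp_add, ea, eb, Real.rpow_zero, Real.exp_zero, mul_one]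
  calc (∫ u in Set.Ioi (-s), (1 + u/s) ^ (-μ-1) * Real.exp (-u^2/2))
      = ((s ^ (μ+1) * s ^ (-μ-1)) * (Real.exp (-s^2/2) * Real.exp (s^2/2))) *
        ∫ u in Set.Ioi (-s), (1 + u/s) ^ (-μ-1) * Real.exp (-u^2/2) := by
        rw [e5, one_mul]
    _ = s ^ (μ+1) * Real.exp (-s^2/2) * ((Real.exp (s^2/2) * s ^ (-μ-1)) *
        ∫ u in Set.Ioi (-s), (1 + u/s) ^ (-μ-1) * Real.exp (-u^2/2)) := by ring

theorem stmt10 (ν : ℝ) (hν : ν < 0) :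
    Filter.Tendsto (fun x : ℝ => (D (ν - 1) x) ^ 2 / (D ν x * D (ν - 2) x))
      Filter.atBot (nhds ((ν - 1) / ν)) := by
  have hν1 : ν - 1 < 0 := by linarith
  have hν2 : ν - 2 < 0 := by linarith
  have hK1 := Klim hν1
  have hK0 := Klim hν
  have hK2 := Klim hν2
  have hIne : Igauss * Igauss ≠ 0 := ne_of_gt (mul_pos Igauss_pos Igauss_pos)
  have hQ1 : Tendsto (fun s : ℝ =>
      (s ^ (ν-1+1) * Real.exp (-s^2/2) * G (ν-1) (-s))^2 /
      ((s ^ (ν+1) * Real.exp (-s^2/2) * G ν (-s)) *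
        (s ^ (ν-2+1) * Real.exp (-s^2/2) * G (ν-2) (-s))))
      atTop (nhds 1) := by
    have h := (hK1.pow 2).div (hK0.mul hK2) hIne
    have e : Igauss^2/(Igauss*Igauss) = 1 := by rw [sq]; exact div_self hIne
    rwa [e] at h
  have hΓ0 : 0 < Real.Gamma (-ν) := Real.Gamma_pos_of_pos (by linarith)
  have hΓ1 : 0 < Real.Gamma (-(ν-1)) := Real.Gamma_pos_of_pos (by linarith)
  have hΓ2 : 0 < Real.Gamma (-(ν-2)) := Real.Gamma_pos_of_pos (by linarith)
  have f1 : Real.Gamma (-(ν-1)) = (-ν) * Real.Gamma (-ν) := by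
    have e2 : -(ν-1) = (-ν) + 1 := by ring
    rw [e2, Real.Gamma_add_one (by intro hc; nlinarith)]
  have f2 : Real.Gamma (-(ν-2)) = (-(ν-1)) * Real.Gamma (-(ν-1)) := by
    have e1 : -(ν-2) = (-(ν-1)) + 1 := by ring
    rw [e1, Real.Gamma_add_one (by intro hc; nlinarith)]
  have hν0 : ν ≠ 0 := ne_of_lt hν
  have hΓrel : Real.Gamma (-ν) * Real.Gamma (-(ν-2)) / (Real.Gamma (-(ν-1)))^2
      = (ν-1)/ν := by
    rw [f2, f1]
    field_simp
  have hmain : Tendsto (fun s : ℝ => (D (ν-1) (-s))^2 / (D ν (-s) * D (ν-2) (-s)))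
      atTop (nhds ((ν-1)/ν)) := by
    have h2 := hQ1.const_mul
      (Real.Gamma (-ν) * Real.Gamma (-(ν-2)) / (Real.Gamma (-(ν-1)))^2)
    rw [mul_one, hΓrel] at h2
    refine Tendsto.congr' ?_ h2
    filter_upwards [eventually_ge_atTop (1:ℝ)] with s hs
    have hs0 : (0:ℝ) < s := by linarith
    have hD : ∀ μ : ℝ, D μ (-s) = Real.exp (-s^2/4) / Real.Gamma (-μ) * G μ (-s) := by
      intro μ; simp [D, neg_sq]
    rw [hD, hD, hD]
    set e4 := Real.exp (-s^2/4) with he4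
    set E := Real.exp (-s^2/2) with hE
    set g1 := G (ν-1) (-s)
    set g0 := G ν (-s)
    set g2 := G (ν-2) (-s)
    have he4pos : 0 < e4 := Real.exp_pos _
    have hEpos : 0 < E := Real.exp_pos _
    have hc : (s ^ (ν-1+1)) ^ 2 = s ^ (ν+1) * s ^ (ν-2+1) := by
      rw [sq, ← Real.rpow_add hs0, ← Real.rpow_add hs0]
      congr 1; ring
    have h6 : (s ^ (ν-1+1) * E * g1)^2
        = ((s ^ (ν+1) * E) * (s ^ (ν-2+1) * E)) * g1^2 := by
      have : (s ^ (ν-1+1) * E * g1)^2 = (s ^ (ν-1+1))^2 * E^2 * g1^2 := by ring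
      rw [this, hc]; ring
    have h7 : (s ^ (ν+1) * E * g0) * (s ^ (ν-2+1) * E * g2)
        = ((s ^ (ν+1) * E) * (s ^ (ν-2+1) * E)) * (g0*g2) := by ring
    have hKeq : (s ^ (ν-1+1) * E * g1)^2 /
        ((s ^ (ν+1) * E * g0) * (s ^ (ν-2+1) * E * g2)) = g1^2/(g0*g2) := by
      rw [h6, h7, mul_div_mul_left _ _ (by positivity)]
    rw [hKeq]
    have h9 : (e4/Real.Gamma (-(ν-1)) * g1)^2
        = (e4^2/(Real.Gamma (-(ν-1)))^2) * g1^2 := by ring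
    have h10 : (e4/Real.Gamma (-ν) * g0) * (e4/Real.Gamma (-(ν-2)) * g2)
        = (e4^2/(Real.Gamma (-ν) * Real.Gamma (-(ν-2)))) * (g0*g2) := by
      field_simp
    rw [h9, h10, mul_div_mul_comm]
    congr 1
    have hone : ∀ (a b c : ℝ), a ≠ 0 → c ≠ 0 → b ≠ 0 → c/b = a/b/(a/c) := by
      intro a b c ha hc hb; field_simp
    rw [← hΓrel]
    exact hone (e4^2) (Real.Gamma (-(ν-1))^2) (Real.Gamma (-ν) * Real.Gamma (-(ν-2)))
      (by positivity) (by positivity) (by positivity)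
  have h := hmain.comp tendsto_neg_atBot_atTop
  have h3 : ((fun s : ℝ => D (ν-1) (-s) ^ 2 / (D ν (-s) * D (ν-2) (-s))) ∘ Neg.neg)
      = fun x : ℝ => D (ν-1) x ^ 2 / (D ν x * D (ν-2) x) := by
    funext x; simp [Function.comp]
  rwa [h3] at h
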